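/- Let G' be a directed graph obtained from a graph H by adding a source vertex i with edges (i,v) for each vertex v of H, where ℓ(i,v) is an upper bound on the true distance D(v) we wish to compute, and suppose for each v either ℓ(i,v) = D(v) or there exists a neighbor path realizing D(v) through edges of H from some u with ℓ(i,u) = D(u). Then the shortest-path distance from i to v in G' equals D(v) for every v, provided D satisfies D(v) ≤ D(u) + ℓ(u,v) for all edges (u,v) of H and for each v either ℓ(i,v) = D(v) or D(v) = D(u) + ℓ(u,v) for some edge (u,v) with ℓ(i,u) = D(u). -/

import Mathlib

def IsWalk {V : Type*} (E : V → V → Prop) (s : V) (p : List V) (t : V) : Prop :=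
  p.head? = some s ∧ p.getLast? = some t ∧ p.Chain' E

def pathLen {V : Type*} (ℓ : V → V → NNReal) (p : List V) : NNReal :=
  ((p.zip p.tail).map fun q => ℓ q.1 q.2).sum

noncomputable def gdist {V : Type*} (E : V → V → Prop) (ℓ : V → V → NNReal)
    (s t : V) : ENNReal :=
  ⨅ (p : List V) (_ : IsWalk E s p t), (pathLen ℓ p : ENNReal)

/-- The augmentation of a graph by a fresh source with an edge to every vertex. -/
def augE {V : Type*} (E : V → V → Prop) : Option V → Option V → Prop :=
  fun a b => match a, b with
    | some u, some v => E u v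
    | none, some _ => True
    | _, none => False

/-- Lengths in the augmented graph: edges from the source i have length c(v). -/
def augL {V : Type*} (ℓ : V → V → NNReal) (c : V → NNReal) :
    Option V → Option V → NNReal :=
  fun a b => match a, b with
    | some u, some v => ℓ u v
    | none, some v => c v
    | _, none => 0


lemma walk_lb {V : Type*} (E : V → V → Prop) (ℓ : V → V → NNReal) (c : V → NNReal)
    (D : V → NNReal) (hfeas : ∀ u v, E u v → D v ≤ D u + ℓ u v) :
    ∀ (q : List (Option V)) (u v : V), IsWalk (augE E) (some u) q (some v) →
      D v ≤ D u + pathLen (augL ℓ c) q := by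
  intro q
  induction q with
  | nil => rintro u v ⟨h, -, -⟩; simp at h
  | cons a t ih =>
    rintro u v ⟨h1, h2, h3⟩
    simp at h1; subst h1
    cases t with
    | nil =>
      simp at h2; subst h2
      simp [pathLen]
    | cons b t' =>
      rcases List.isChain_cons_cons.mp h3 with ⟨hab, hchain⟩
      cases b with
      | none => exact absurd hab (by simp [augE])
      | some w =>
        have hEw : E u w := hab
        have hwalk : IsWalk (augE E) (some w) (some w :: t') (some v) :=
          ⟨rfl, by rw [← h2]; simp [List.getLast?_cons_cons], hchain⟩
        have := ih w v hwalk
        have hlen : pathLen (augL ℓ c) (some u :: some w :: t')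
            = ℓ u w + pathLen (augL ℓ c) (some w :: t') := by
          simp [pathLen, augL]
        rw [hlen]
        calc D v ≤ D w + pathLen (augL ℓ c) (some w :: t') := this
          _ ≤ (D u + ℓ u w) + pathLen (augL ℓ c) (some w :: t') := by
              exact add_le_add_left (hfeas u w hEw) _
          _ = D u + (ℓ u w + pathLen (augL ℓ c) (some w :: t')) := by ring

/-- Abstract version of Lemmas 1–2: if the edges (i,v) overestimate D, D is
feasible on H, and for each v either ℓ(i,v) = D(v) or D(v) is realized through
a neighbor u with ℓ(i,u) = D(u), then SSSP from i on G' recovers D. -/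
theorem aug_sssp_recovers_D {V : Type*} [Fintype V] (E : V → V → Prop)
    (ℓ : V → V → NNReal) (D c : V → NNReal)
    (hub : ∀ v, D v ≤ c v)
    (hfeas : ∀ u v, E u v → D v ≤ D u + ℓ u v)
    (hreal : ∀ v, c v = D v ∨ ∃ u, E u v ∧ D v = D u + ℓ u v ∧ c u = D u) :
    ∀ v, gdist (augE E) (augL ℓ c) none (some v) = (D v : ENNReal) := by
  intro v
  apply le_antisymm
  · rcases hreal v with hcv | ⟨u, hE, hD, hcu⟩
    · refine iInf_le_of_le [none, some v] (iInf_le_of_le ?_ ?_)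
      · exact ⟨rfl, rfl, List.isChain_cons_cons.mpr ⟨trivial, List.isChain_singleton _⟩⟩
      · simp [pathLen, augL, hcv]
    · refine iInf_le_of_le [none, some u, some v] (iInf_le_of_le ?_ ?_)
      · exact ⟨rfl, rfl, List.isChain_cons_cons.mpr ⟨trivial, List.isChain_cons_cons.mpr ⟨hE, List.isChain_singleton _⟩⟩⟩
      · have : pathLen (augL ℓ c) [none, some u, some v] = c u + ℓ u v := by
          simp [pathLen, augL]
        rw [this, hcu, ← hD]
  · refine le_iInf fun p => le_iInf fun hw => ?_
    obtain ⟨h1, h2, h3⟩ := hw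
    cases p with
    | nil => simp at h1
    | cons a q =>
      simp at h1; subst h1
      cases q with
      | nil => simp at h2
      | cons b t =>
        rcases List.isChain_cons_cons.mp h3 with ⟨hab, hchain⟩
        cases b with
        | none => exact absurd hab (by simp [augE])
        | some u =>
          have hwalk : IsWalk (augE E) (some u) (some u :: t) (some v) :=
            ⟨rfl, by rw [← h2]; simp [List.getLast?_cons_cons], hchain⟩
          have hkey := walk_lb E ℓ c D hfeas (some u :: t) u v hwalk
          have hlen : pathLen (augL ℓ c) (none :: some u :: t)
              = c u + pathLen (augL ℓ c) (some u :: t) := by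
            simp [pathLen, augL]
          have : D v ≤ c u + pathLen (augL ℓ c) (some u :: t) :=
            hkey.trans (add_le_add_left (hub u) _)
          rw [hlen]
          exact_mod_cast this
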